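/- arXiv:1412.0220 — 4 statements merged into one kernel-verified Lean document; each statement's English description precedes it below -/
import Mathlib

section
/- For every probability measure ν on [0,∞) with cumulative distribution function F(s) = ν([0,s]), every α > 0 and every t > 0, the Kendall–Williamson transform satisfies Φ_ν(t) = α t^α ∫_0^{1/t} s^{α−1} F(s) ds. -/
open MeasureTheory Set

private lemma measurable_rpow_const'' (c : ℝ) : Measurable fun x : ℝ => x ^ c := by
  have h : (fun x : ℝ => x ^ c) = fun x =>
      if x = 0 then (if c = 0 then 1 else 0)
      else Real.exp (Real.log x * c) * (if x < 0 then Real.cos (c * Real.pi) else 1) := by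
    funext x
    rcases lt_trichotomy x 0 with hx | hx | hx
    · rw [if_neg hx.ne, if_pos hx, Real.rpow_def_of_neg hx]
    · subst hx
      rcases eq_or_ne c 0 with hc | hc
      · simp [hc]
      · simp [Real.zero_rpow hc, hc]
    · rw [if_neg hx.ne', if_neg (not_lt.mpr hx.le), Real.rpow_def_of_pos hx, mul_one]
  rw [h]
  have hset : MeasurableSet {x : ℝ | x = 0} := by
    simpa [Set.setOf_eq_eq_singleton] using measurableSet_singleton (0 : ℝ)
  exact Measurable.ite hset measurable_const
    ((Real.measurable_exp.comp (Real.measurable_log.mul_const c)).mul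
      (Measurable.ite measurableSet_Iio measurable_const measurable_const))


/-- For every probability measure `ν` on `[0,∞)` with cdf `F s = ν [0,s]`, every `α > 0`
and `t > 0`, the Kendall–Williamson transform
`Φ_ν(t) = ∫ (1 - (t s)^α)_+ ν(ds)` satisfies
`Φ_ν(t) = α t^α ∫_0^{1/t} s^(α-1) F(s) ds`. -/
theorem williamson_eq_integral_cdf
    (ν : Measure ℝ) [IsProbabilityMeasure ν] (hν : ν (Set.Iio 0) = 0)
    (α t : ℝ) (hα : 0 < α) (ht : 0 < t) :
    ∫ s, max (1 - (t * s) ^ α) 0 ∂ν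
      = α * t ^ α * ∫ s in (0:ℝ)..(1 / t),
          s ^ (α - 1) * (ν (Set.Icc 0 s)).toReal := by
  set c : ℝ := 1 / t with hc
  have hc0 : 0 < c := by positivity
  set K : ℝ := α * t ^ α with hK
  have htα : 0 < t ^ α := Real.rpow_pos_of_pos ht α
  have hK0 : 0 < K := by positivity
  set g : ℝ → ENNReal := fun u => ENNReal.ofReal (K * u ^ (α - 1)) with hgdef
  have hg : Measurable g :=
    ((measurable_rpow_const'' (α - 1)).const_mul K).ennreal_ofReal
  set H : ℝ → ℝ → ENNReal := fun s u => (Ici s).indicator g u with hHdef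
  have hs_ae : ∀ᵐ s ∂ν, 0 ≤ s := by
    have h0 : {s : ℝ | ¬ 0 ≤ s} = Iio 0 := by ext x; simp [not_le]
    rw [ae_iff, h0]; exact hν
  -- key pointwise identity
  have key : ∀ s : ℝ, 0 ≤ s →
      ENNReal.ofReal (max (1 - (t * s) ^ α) 0) = ∫⁻ u in Ioc 0 c, H s u := by
    intro s hs
    rw [hHdef]
    rw [lintegral_indicator measurableSet_Ici,
      Measure.restrict_restrict measurableSet_Ici]
    have hset : (Ici s ∩ Ioc 0 c : Set ℝ) =ᵐ[volume] (Ioc s c : Set ℝ) := by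
      rw [ae_eq_set]
      constructor
      · refine measure_mono_null (fun u hu => ?_) (measure_singleton s)
        simp only [mem_diff, mem_inter_iff, mem_Ici, mem_Ioc, not_and, not_le,
          mem_singleton_iff] at hu ⊢
        rcases hu with ⟨⟨h1, _, h3⟩, h4⟩
        have h5 : ¬ s < u := fun hlt => absurd h3 (not_le.mpr (h4 hlt))
        exact le_antisymm (not_lt.mp h5) h1
      · have hsub : Ioc s c ⊆ Ici s ∩ Ioc 0 c := fun u hu =>
          ⟨le_of_lt hu.1, lt_of_le_of_lt hs hu.1, hu.2⟩
        rw [diff_eq_empty.mpr hsub]; exact measure_empty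
    rw [setLIntegral_congr hset]
    rcases le_or_gt s c with hsc | hsc
    · have hInt : IntegrableOn (fun u : ℝ => K * u ^ (α - 1)) (Ioc s c) volume := by
        rw [← intervalIntegrable_iff_integrableOn_Ioc_of_le hsc]
        exact (intervalIntegral.intervalIntegrable_rpow' (by linarith)).const_mul K
      have hnn : 0 ≤ᵐ[volume.restrict (Ioc s c)] fun u : ℝ => K * u ^ (α - 1) := by
        filter_upwards [self_mem_ae_restrict measurableSet_Ioc] with u hu
        have hu0 : (0:ℝ) ≤ u := le_of_lt (lt_of_le_of_lt hs hu.1)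
        exact mul_nonneg hK0.le (Real.rpow_nonneg hu0 _)
      rw [hgdef, ← ofReal_integral_eq_lintegral_ofReal hInt hnn]
      congr 1
      rw [← intervalIntegral.integral_of_le hsc, intervalIntegral.integral_const_mul,
        integral_rpow (Or.inl (by linarith))]
      have he : α - 1 + 1 = α := by ring
      rw [he]
      have hts : t * s ≤ 1 := by
        calc t * s ≤ t * c := by nlinarith
          _ = 1 := by rw [hc]; field_simp
      have hmax : max (1 - (t * s) ^ α) 0 = 1 - (t * s) ^ α := by
        refine max_eq_left ?_
        have := Real.rpow_le_one (by positivity) hts hα.le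
        linarith
      have h1 : t ^ α * c ^ α = 1 := by
        rw [← Real.mul_rpow ht.le hc0.le, hc, mul_one_div_cancel ht.ne', Real.one_rpow]
      have h2 : t ^ α * s ^ α = (t * s) ^ α := (Real.mul_rpow ht.le hs).symm
      have h3 : K * ((c ^ α - s ^ α) / α) = t ^ α * c ^ α - t ^ α * s ^ α := by
        rw [hK]; field_simp
      rw [hmax, h3, h1, h2]
    · rw [Ioc_eq_empty (not_lt.mpr hsc.le), Measure.restrict_empty, lintegral_zero_measure]
      have hts : (1:ℝ) ≤ t * s := by
        have : 1 / t < s := hsc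
        calc (1:ℝ) = t * (1/t) := by field_simp
          _ ≤ t * s := by nlinarith
      have h1 : (1:ℝ) ≤ (t * s) ^ α := Real.one_le_rpow hts hα.le
      rw [max_eq_right (by linarith), ENNReal.ofReal_zero]
  -- LHS as lintegral
  have hfmeas : Measurable fun s : ℝ => max (1 - (t * s) ^ α) 0 :=
    ((measurable_const.sub
      ((measurable_rpow_const'' α).comp (measurable_id.const_mul t))).max measurable_const)
  have hA : ∫ s, max (1 - (t * s) ^ α) 0 ∂ν
      = (∫⁻ s, ENNReal.ofReal (max (1 - (t * s) ^ α) 0) ∂ν).toReal :=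
    integral_eq_lintegral_of_nonneg_ae (ae_of_all _ fun s => le_max_right _ _)
      hfmeas.aestronglyMeasurable
  rw [hA]
  have hB : (fun s => ENNReal.ofReal (max (1 - (t * s) ^ α) 0))
      =ᵐ[ν] fun s => ∫⁻ u in Ioc 0 c, H s u := hs_ae.mono key
  rw [lintegral_congr_ae hB]
  -- swap
  have hH : AEMeasurable (Function.uncurry H) (ν.prod (volume.restrict (Ioc 0 c))) := by
    have huncurry : Function.uncurry H
        = fun p : ℝ × ℝ => ({p : ℝ × ℝ | p.1 ≤ p.2}).indicator (fun p => g p.2) p := by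
      funext p
      simp [Function.uncurry, hHdef, Set.indicator_apply]
    rw [huncurry]
    exact ((hg.comp measurable_snd).indicator
      (measurableSet_le measurable_fst measurable_snd)).aemeasurable
  rw [lintegral_lintegral_swap hH]
  -- inner integral
  have hinner : ∀ u : ℝ, ∫⁻ s, H s u ∂ν = g u * ν (Iic u) := by
    intro u
    have : (fun s => H s u) = (Iic u).indicator fun _ => g u := by
      funext s
      simp [hHdef, Set.indicator_apply]
    rw [this, lintegral_indicator_const measurableSet_Iic]
  simp_rw [hinner]
  -- rewrite the integrand a.e. on Ioc 0 c
  have hstep : (fun u => g u * ν (Iic u))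
      =ᵐ[volume.restrict (Ioc 0 c)]
      fun u => ENNReal.ofReal K * (ENNReal.ofReal (u ^ (α - 1)) * ν (Icc 0 u)) := by
    rw [Filter.EventuallyEq, ae_restrict_iff' measurableSet_Ioc]
    refine ae_of_all _ fun u hu => ?_
    have hIic : ν (Iic u) = ν (Icc 0 u) := by
      refine le_antisymm ?_ (measure_mono fun x hx => hx.2)
      calc ν (Iic u) ≤ ν (Icc 0 u ∪ Iio 0) := by
            refine measure_mono fun x hx => ?_
            rcases le_or_gt 0 x with h0 | h0
            · exact Or.inl ⟨h0, hx⟩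
            · exact Or.inr h0
        _ ≤ ν (Icc 0 u) + ν (Iio 0) := measure_union_le _ _
        _ = ν (Icc 0 u) := by rw [hν, add_zero]
    simp only [hgdef]
    rw [ENNReal.ofReal_mul hK0.le, hIic, mul_assoc]
  rw [lintegral_congr_ae hstep, lintegral_const_mul' _ _ ENNReal.ofReal_ne_top,
    ENNReal.toReal_mul, ENNReal.toReal_ofReal hK0.le]
  -- RHS
  have hFmono : Monotone fun u : ℝ => (ν (Icc 0 u)).toReal := fun a b hab =>
    ENNReal.toReal_mono (measure_ne_top ν _) (measure_mono (Icc_subset_Icc_right hab))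
  have hFmeas : Measurable fun u : ℝ => (ν (Icc 0 u)).toReal := hFmono.measurable
  rw [intervalIntegral.integral_of_le hc0.le]
  have hnnR : 0 ≤ᵐ[volume.restrict (Ioc 0 c)]
      fun u : ℝ => u ^ (α - 1) * (ν (Icc 0 u)).toReal := by
    filter_upwards [self_mem_ae_restrict measurableSet_Ioc] with u hu
    exact mul_nonneg (Real.rpow_nonneg hu.1.le _) ENNReal.toReal_nonneg
  have hR : ∫ u in Ioc 0 c, u ^ (α - 1) * (ν (Icc 0 u)).toReal
      = (∫⁻ u in Ioc 0 c,
          ENNReal.ofReal (u ^ (α - 1) * (ν (Icc 0 u)).toReal)).toReal :=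
    integral_eq_lintegral_of_nonneg_ae hnnR
      ((measurable_rpow_const'' (α - 1)).mul hFmeas).aestronglyMeasurable
  rw [hR]
  have hcong : (fun u : ℝ => ENNReal.ofReal (u ^ (α - 1) * (ν (Icc 0 u)).toReal))
      =ᵐ[volume.restrict (Ioc 0 c)]
      fun u => ENNReal.ofReal (u ^ (α - 1)) * ν (Icc 0 u) := by
    rw [Filter.EventuallyEq, ae_restrict_iff' measurableSet_Ioc]
    refine ae_of_all _ fun u hu => ?_
    rw [ENNReal.ofReal_mul (Real.rpow_nonneg hu.1.le _),
      ENNReal.ofReal_toReal (measure_ne_top ν _)]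
  rw [lintegral_congr_ae hcong]
end

section
/- For all α > 0, all real numbers 0 ≤ a ≤ b with b > 0, and all t ≥ 0, one has ∫ (1 − (tx)^α)_+ ρ_{a,b}(dx) = (1 − (ta)^α)_+ · (1 − (tb)^α)_+, where ρ_{a,b} = (1 − (a/b)^α) δ_b + (a/b)^α T_b π_{2α}; explicitly, (1 − (ta)^α)_+ (1 − (tb)^α)_+ = (1 − (a/b)^α)(1 − (tb)^α)_+ + (a/b)^α ∫_1^∞ (1 − (tbs)^α)_+ · 2α s^{−2α−1} ds. -/
open MeasureTheory Set

/-- The Pareto probability measure `π_{2α}` on `ℝ`, with density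
`2α x^(-(2α+1)) 1_{(1,∞)}(x)` with respect to Lebesgue measure. -/
noncomputable def pareto (α : ℝ) : Measure ℝ :=
  volume.withDensity
    (fun x => ENNReal.ofReal (if 1 < x then 2 * α * x ^ (-(2 * α) - 1) else 0))

section aux

lemma meas_rpow_const (p : ℝ) : Measurable fun x : ℝ => x ^ p := by measurability

variable {α c : ℝ}

/-- Integrability of the Williamson integrand against the Pareto density on `(1,∞)`. -/
lemma kendall_integrableOn (hα : 0 < α) (hc : 0 ≤ c) :
    IntegrableOn (fun s : ℝ => max (1 - (c * s) ^ α) 0 * (2 * α * s ^ (-(2 * α) - 1)))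
      (Ioi (1:ℝ)) := by
  have hmaj : IntegrableOn (fun s : ℝ => 2 * α * s ^ (-(2 * α) - 1)) (Ioi (1:ℝ)) :=
    (integrableOn_Ioi_rpow_of_lt (by linarith) one_pos).const_mul (2 * α)
  refine hmaj.mono' ?_ ?_
  · apply ContinuousOn.aestronglyMeasurable ?_ measurableSet_Ioi
    apply ContinuousOn.mul
    · apply Continuous.continuousOn
      exact ((continuous_const.sub ((continuous_const.mul continuous_id).rpow_const
        (fun x => Or.inr hα.le))).max continuous_const)
    · exact (continuousOn_const.mul ((continuousOn_id.rpow_const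
        (fun x hx => Or.inl (by rintro rfl; exact absurd hx (by simp))))))
  · filter_upwards [ae_restrict_mem measurableSet_Ioi] with s hs
    have hs1 : (1:ℝ) < s := hs
    have hspos : (0:ℝ) < s := by linarith
    have h1 : 0 < s ^ (-(2 * α) - 1) := Real.rpow_pos_of_pos hspos _
    have h2 : 0 ≤ max (1 - (c * s) ^ α) 0 := le_max_right _ _
    have h3 : max (1 - (c * s) ^ α) 0 ≤ 1 := by
      have : 0 ≤ (c * s) ^ α := Real.rpow_nonneg (by positivity) _
      apply max_le (by linarith) zero_le_one
    rw [Real.norm_eq_abs, abs_of_nonneg (by positivity)]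
    calc max (1 - (c * s) ^ α) 0 * (2 * α * s ^ (-(2 * α) - 1))
        ≤ 1 * (2 * α * s ^ (-(2 * α) - 1)) := by
          apply mul_le_mul_of_nonneg_right h3 (by positivity)
      _ = 2 * α * s ^ (-(2 * α) - 1) := one_mul _

/-- The key computation: the Williamson integral of the Pareto measure. -/
lemma kendall_integral (hα : 0 < α) (hc : 0 ≤ c) :
    ∫ s in Ioi (1:ℝ), max (1 - (c * s) ^ α) 0 * (2 * α * s ^ (-(2 * α) - 1))
      = max (1 - c ^ α) 0 ^ 2 := by
  rcases eq_or_lt_of_le hc with rfl | hc0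
  · have h0 : ∀ s : ℝ, ((0:ℝ) * s) ^ α = 0 := by
      intro s; rw [zero_mul, Real.zero_rpow hα.ne']
    have : ∫ s in Ioi (1:ℝ), max (1 - ((0:ℝ) * s) ^ α) 0 * (2 * α * s ^ (-(2 * α) - 1))
        = ∫ s in Ioi (1:ℝ), 2 * α * s ^ (-(2 * α) - 1) := by
      apply setIntegral_congr_fun measurableSet_Ioi
      intro s _; dsimp only; rw [h0, sub_zero, max_eq_left zero_le_one, one_mul]
    rw [this, MeasureTheory.integral_const_mul,
      integral_Ioi_rpow_of_lt (by linarith) one_pos]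
    rw [Real.zero_rpow hα.ne', Real.one_rpow]
    have h2α : (2 * α) ≠ 0 := by positivity
    norm_num
    field_simp
  · rcases le_or_gt 1 c with hc1 | hc1
    · -- c ≥ 1 : everything vanishes
      have hca : 1 ≤ c ^ α := Real.one_le_rpow hc1 hα.le
      have hL : ∫ s in Ioi (1:ℝ), max (1 - (c * s) ^ α) 0 * (2 * α * s ^ (-(2 * α) - 1))
          = 0 := by
        have heq : ∀ s ∈ Ioi (1:ℝ),
            max (1 - (c * s) ^ α) 0 * (2 * α * s ^ (-(2 * α) - 1)) = (0:ℝ) := by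
          intro s hs
          have hs1 : (1:ℝ) < s := hs
          have h1 : 1 < c * s := by nlinarith
          have h2 : 1 ≤ (c * s) ^ α := Real.one_le_rpow h1.le hα.le
          rw [max_eq_right (by linarith), zero_mul]
        rw [setIntegral_congr_fun measurableSet_Ioi heq, integral_zero]
      rw [hL, max_eq_right (by linarith)]
      norm_num
    · -- 0 < c < 1
      set u : ℝ := 1 / c with hu
      have hupos : 0 < u := by positivity
      have hu1 : 1 < u := by rw [hu]; rw [lt_div_iff₀ hc0]; linarith
      have hcu : c * u = 1 := by rw [hu]; field_simp
      have hInt := kendall_integrableOn hα hc (c := c)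
      have hsplit : Ioc (1:ℝ) u ∪ Ioi u = Ioi (1:ℝ) := Ioc_union_Ioi_eq_Ioi hu1.le
      have hI2 : ∫ s in Ioi u, max (1 - (c * s) ^ α) 0 * (2 * α * s ^ (-(2 * α) - 1))
          = 0 := by
        have heq : ∀ s ∈ Ioi u,
            max (1 - (c * s) ^ α) 0 * (2 * α * s ^ (-(2 * α) - 1)) = (0:ℝ) := by
          intro s hs
          have hs1 : u < s := hs
          have h1 : 1 < c * s := by
            calc (1:ℝ) = c * u := hcu.symm
              _ < c * s := by exact mul_lt_mul_of_pos_left hs1 hc0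
          have h2 : 1 ≤ (c * s) ^ α := Real.one_le_rpow h1.le hα.le
          rw [max_eq_right (by linarith), zero_mul]
        rw [setIntegral_congr_fun measurableSet_Ioi heq, integral_zero]
      have hI1 : ∫ s in Ioc (1:ℝ) u, max (1 - (c * s) ^ α) 0 * (2 * α * s ^ (-(2 * α) - 1))
          = (1 - c ^ α) ^ 2 := by
        have hcongr : ∫ s in Ioc (1:ℝ) u, max (1 - (c * s) ^ α) 0 * (2 * α * s ^ (-(2 * α) - 1))
            = ∫ s in Ioc (1:ℝ) u,
                (2 * α * s ^ (-(2 * α) - 1) - 2 * α * c ^ α * s ^ (-α - 1)) := by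
          apply setIntegral_congr_fun measurableSet_Ioc
          intro s hs
          dsimp only
          have hs1 : (1:ℝ) < s := hs.1
          have hsu : s ≤ u := hs.2
          have hspos : (0:ℝ) < s := by linarith
          have hcs : c * s ≤ 1 := by
            calc c * s ≤ c * u := by exact mul_le_mul_of_nonneg_left hsu hc0.le
              _ = 1 := hcu
          have hcsa : (c * s) ^ α ≤ 1 := Real.rpow_le_one (by positivity) hcs hα.le
          rw [max_eq_left (by linarith)]
          rw [Real.mul_rpow hc0.le hspos.le]
          have hpow : s ^ α * s ^ (-(2 * α) - 1) = s ^ (-α - 1) := by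
            rw [← Real.rpow_add hspos]; ring_nf
          have : c ^ α * s ^ α * (2 * α * s ^ (-(2 * α) - 1))
              = 2 * α * c ^ α * s ^ (-α - 1) := by
            rw [← hpow]; ring
          nlinarith [this]
        rw [hcongr, ← intervalIntegral.integral_of_le hu1.le]
        have h0mem : (0:ℝ) ∉ uIcc (1:ℝ) u := by
          rw [Set.uIcc_of_le hu1.le]
          intro h; exact absurd h.1 (by norm_num)
        have hi1 : IntervalIntegrable (fun s : ℝ => s ^ (-(2 * α) - 1)) volume 1 u :=
          intervalIntegral.intervalIntegrable_rpow (Or.inr h0mem)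
        have hi1' : IntervalIntegrable (fun s : ℝ => 2 * α * s ^ (-(2 * α) - 1)) volume 1 u :=
          hi1.const_mul _
        have hi2 : IntervalIntegrable (fun s : ℝ => s ^ (-α - 1)) volume 1 u :=
          intervalIntegral.intervalIntegrable_rpow (Or.inr h0mem)
        have hi2' : IntervalIntegrable (fun s : ℝ => 2 * α * c ^ α * s ^ (-α - 1)) volume 1 u :=
          hi2.const_mul _
        rw [intervalIntegral.integral_sub hi1' hi2',
          intervalIntegral.integral_const_mul, intervalIntegral.integral_const_mul,
          integral_rpow (Or.inr ⟨by intro h; nlinarith, h0mem⟩),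
          integral_rpow (Or.inr ⟨by intro h; nlinarith, h0mem⟩)]
        have hu2a : u ^ (-(2 * α) - 1 + 1) = (c ^ α) ^ 2 := by
          have : -(2 * α) - 1 + 1 = -(2 * α) := by ring
          rw [this, hu, one_div, Real.inv_rpow hc0.le, Real.rpow_neg hc0.le, inv_inv,
            show (2 * α) = α * 2 by ring, Real.rpow_mul hc0.le, Real.rpow_two]
        have hua : u ^ (-α - 1 + 1) = c ^ α := by
          have : -α - 1 + 1 = -α := by ring
          rw [this, hu, one_div, Real.inv_rpow hc0.le, Real.rpow_neg hc0.le, inv_inv]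
        rw [hu2a, hua, Real.one_rpow, Real.one_rpow]
        have hα' : α ≠ 0 := hα.ne'
        field_simp
        linear_combination (4 * α * (c ^ α - (c ^ α) ^ 2)) * mul_inv_cancel₀ hα'
      rw [← hsplit, setIntegral_union (Ioc_disjoint_Ioi le_rfl) measurableSet_Ioi
        (hInt.mono_set (by rw [← hsplit]; exact subset_union_left))
        (hInt.mono_set (by rw [← hsplit]; exact subset_union_right)),
        hI1, hI2, add_zero]
      have hca : c ^ α < 1 := Real.rpow_lt_one hc0.le hc1 hα
      rw [max_eq_left (by linarith)]

end aux

/-- For `α > 0`, `0 ≤ a ≤ b`, `b > 0` and `t ≥ 0`, the integral of `x ↦ (1 - (t x)^α)_+`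
against the Kendall kernel `ρ_{a,b} = (1 - (a/b)^α) δ_b + (a/b)^α T_b π_{2α}` equals
`(1 - (t a)^α)_+ (1 - (t b)^α)_+`; explicitly,
`(1 - (t a)^α)_+ (1 - (t b)^α)_+
  = (1 - (a/b)^α)(1 - (t b)^α)_+ + (a/b)^α ∫_1^∞ (1 - (t b s)^α)_+ · 2α s^(-2α-1) ds`. -/
theorem kendall_kernel_williamson
    (α a b t : ℝ) (hα : 0 < α) (ha : 0 ≤ a) (hab : a ≤ b) (hb : 0 < b) (ht : 0 ≤ t) :
    (∫ x, max (1 - (t * x) ^ α) 0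
        ∂(ENNReal.ofReal (1 - (a / b) ^ α) • Measure.dirac b
          + ENNReal.ofReal ((a / b) ^ α) • Measure.map (fun x => b * x) (pareto α))
      = max (1 - (t * a) ^ α) 0 * max (1 - (t * b) ^ α) 0)
    ∧ max (1 - (t * a) ^ α) 0 * max (1 - (t * b) ^ α) 0
      = (1 - (a / b) ^ α) * max (1 - (t * b) ^ α) 0
        + (a / b) ^ α * ∫ s in Set.Ioi (1:ℝ),
            max (1 - (t * b * s) ^ α) 0 * (2 * α * s ^ (-(2 * α) - 1)) := by
  set c : ℝ := t * b with hc
  set r : ℝ := (a / b) ^ α with hr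
  have hc0 : 0 ≤ c := by positivity
  have hr0 : 0 ≤ r := Real.rpow_nonneg (by positivity) _
  have hr1 : r ≤ 1 := Real.rpow_le_one (by positivity) (by rw [div_le_one hb]; exact hab) hα.le
  have hta : (t * a) ^ α = r * c ^ α := by
    have : t * a = c * (a / b) := by field_simp [hc]; ring
    rw [this, Real.mul_rpow hc0 (by positivity), hr]; ring
  have hJ := kendall_integral hα hc0 (α := α)
  -- the algebraic identity (second conjunct, with the integral evaluated)
  have halg : max (1 - (t * a) ^ α) 0 * max (1 - c ^ α) 0
      = (1 - r) * max (1 - c ^ α) 0 + r * max (1 - c ^ α) 0 ^ 2 := by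
    rcases le_or_gt 1 (c ^ α) with h1 | h1
    · have hm : max (1 - c ^ α) 0 = 0 := max_eq_right (by linarith)
      rw [hm]; ring
    · have h2 : r * c ^ α ≤ 1 * 1 := by
        apply mul_le_mul hr1 h1.le (Real.rpow_nonneg hc0 _) zero_le_one
      have hca0 : 0 ≤ c ^ α := Real.rpow_nonneg hc0 _
      have h3 : r * c ^ α ≤ c ^ α := by nlinarith
      rw [hta, max_eq_left (by linarith), max_eq_left (by linarith)]
      ring
  -- continuity and measurability facts
  have hf_cont : Continuous (fun x : ℝ => max (1 - (t * x) ^ α) 0) :=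
    (continuous_const.sub ((continuous_const.mul continuous_id).rpow_const
      (fun x => Or.inr hα.le))).max continuous_const
  -- rewrite the pareto measure with an ℝ≥0-valued density
  set dens : ℝ → ℝ := fun x => if 1 < x then 2 * α * x ^ (-(2 * α) - 1) else 0 with hdens
  have hdens_nonneg : ∀ x, 0 ≤ dens x := by
    intro x
    rw [hdens]
    dsimp only
    split_ifs with hx
    · have : (0:ℝ) < x := by linarith
      positivity
    · exact le_rfl
  have hdens_meas : Measurable dens := by
    rw [hdens]
    exact Measurable.ite measurableSet_Ioi ((meas_rpow_const _).const_mul _) measurable_const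
  have hpareto : pareto α = volume.withDensity (fun x => ((dens x).toNNReal : ENNReal)) := by
    rw [pareto, hdens]
    rfl
  have hnn_meas : Measurable (fun x => (dens x).toNNReal) := hdens_meas.real_toNNReal
  -- the integrand after smul by the density is the indicator of the Ioi-1 integrand
  have hind : (fun x : ℝ => (dens x).toNNReal • max (1 - (t * (b * x)) ^ α) 0)
      = (Ioi (1:ℝ)).indicator
        (fun s => max (1 - (t * b * s) ^ α) 0 * (2 * α * s ^ (-(2 * α) - 1))) := by
    funext x
    rw [Set.indicator_apply]
    have hd : ((dens x).toNNReal : ℝ) = dens x := Real.coe_toNNReal _ (hdens_nonneg x)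
    simp only [mem_Ioi, NNReal.smul_def, hd, hdens]
    split_ifs with hx
    · have hx0 : (0:ℝ) < x := by linarith
      rw [smul_eq_mul, mul_assoc t b x, Real.coe_toNNReal _ (by positivity)]; ring
    · simp
  have hIoiInt := kendall_integrableOn hα hc0 (α := α)
  have hIoiInt' : IntegrableOn
      (fun s : ℝ => max (1 - (t * b * s) ^ α) 0 * (2 * α * s ^ (-(2 * α) - 1)))
      (Ioi (1:ℝ)) := by
    simpa [hc] using hIoiInt
  -- integrability w.r.t. the mapped pareto measure
  have hInt2 : Integrable (fun x : ℝ => max (1 - (t * x) ^ α) 0)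
      (Measure.map (fun x => b * x) (pareto α)) := by
    rw [integrable_map_measure hf_cont.aestronglyMeasurable
      (measurable_const_mul b).aemeasurable, hpareto]
    rw [integrable_withDensity_iff_integrable_smul hnn_meas]
    have : (fun x : ℝ => (dens x).toNNReal • max (1 - (t * (b * x)) ^ α) 0)
        = (Ioi (1:ℝ)).indicator
          (fun s => max (1 - (t * b * s) ^ α) 0 * (2 * α * s ^ (-(2 * α) - 1))) := hind
    show Integrable (fun x : ℝ => (dens x).toNNReal • max (1 - (t * (b * x)) ^ α) 0) volume
    rw [this, integrable_indicator_iff measurableSet_Ioi]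
    exact hIoiInt'
  have hInt1 : Integrable (fun x : ℝ => max (1 - (t * x) ^ α) 0) (Measure.dirac b) := by
    refine ⟨hf_cont.aestronglyMeasurable, ?_⟩
    unfold HasFiniteIntegral
    rw [lintegral_dirac]
    exact ENNReal.coe_lt_top
  -- compute the integral against the mapped pareto measure
  have hmap : ∫ x, max (1 - (t * x) ^ α) 0 ∂(Measure.map (fun x => b * x) (pareto α))
      = ∫ s in Ioi (1:ℝ), max (1 - (t * b * s) ^ α) 0 * (2 * α * s ^ (-(2 * α) - 1)) := by
    rw [integral_map (measurable_const_mul b).aemeasurable hf_cont.aestronglyMeasurable,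
      hpareto, integral_withDensity_eq_integral_smul hnn_meas]
    rw [show (fun x : ℝ => (dens x).toNNReal • max (1 - (t * (b * x)) ^ α) 0)
        = (Ioi (1:ℝ)).indicator
          (fun s => max (1 - (t * b * s) ^ α) 0 * (2 * α * s ^ (-(2 * α) - 1))) from hind]
    rw [integral_indicator measurableSet_Ioi]
  constructor
  · rw [integral_add_measure (hInt1.smul_measure ENNReal.ofReal_ne_top)
      (hInt2.smul_measure ENNReal.ofReal_ne_top),
      integral_smul_measure, integral_smul_measure, integral_dirac, hmap, hJ,
      ENNReal.toReal_ofReal (by linarith), ENNReal.toReal_ofReal hr0]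
    try rw [← hc]
    rw [smul_eq_mul, smul_eq_mul]
    exact halg.symm
  · rw [hJ]
    exact halg
end

section
/- For every probability measure ν on [0,∞), every α > 0, every natural number n and every t ≥ 0, the Kendall–Williamson transform of the n-fold Kendall convolution power of ν satisfies Φ_{ν^{△_α n}}(t) = (Φ_ν(t))^n. -/
open MeasureTheory Set

/-- The Kendall probability kernel `ρ_{a,b} = (1 - (a/b)^α) δ_b + (a/b)^α T_b π_{2α}`
for `0 ≤ a ≤ b` (with `ρ_{0,0} = δ_0`). -/
noncomputable def kendallKernelLe (α a b : ℝ) : Measure ℝ :=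
  if b = 0 then Measure.dirac 0
  else ENNReal.ofReal (1 - (a / b) ^ α) • Measure.dirac b
      + ENNReal.ofReal ((a / b) ^ α) • Measure.map (fun x => b * x) (pareto α)

/-- The Kendall kernel `ρ_{x,y}`, extended symmetrically. -/
noncomputable def kendallKernel (α x y : ℝ) : Measure ℝ :=
  kendallKernelLe α (min x y) (max x y)

/-- The Kendall convolution `λ △_α ν`, defined by
`(λ △_α ν)(A) = ∫∫ ρ_{x,y}(A) λ(dx) ν(dy)`. -/
noncomputable def kendallConv (α : ℝ) (lam ν : Measure ℝ) : Measure ℝ :=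
  lam.bind (fun x => ν.bind (fun y => kendallKernel α x y))

/-- The `n`-fold Kendall convolution power `ν^{△_α n}`, with `ν^{△_α 0} = δ_0`. -/
noncomputable def kendallPow (α : ℝ) (ν : Measure ℝ) : ℕ → Measure ℝ
  | 0 => Measure.dirac 0
  | n + 1 => kendallConv α (kendallPow α ν n) ν

/-- The Kendall–Williamson transform `Φ_ν(t) = ∫ (1 - (t s)^α)_+ ν(ds)`. -/
noncomputable def williamson (α : ℝ) (ν : Measure ℝ) (t : ℝ) : ℝ :=
  ∫ s, max (1 - (t * s) ^ α) 0 ∂ν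

/-! ### Auxiliary lemmas -/

section Aux

open scoped ENNReal

lemma KG_meas (α t : ℝ) :
    Measurable fun s : ℝ => ENNReal.ofReal (max (1 - (t * s) ^ α) 0) := by fun_prop

/-- Integrability of the integrand appearing in the Pareto integral. -/
lemma J_integrable (α c : ℝ) (hα : 0 < α) (hc : 0 ≤ c) :
    IntegrableOn (fun x : ℝ => 2 * α * x ^ (-(2 * α) - 1) * max (1 - c * x ^ α) 0)
      (Ioi 1) volume := by
  have hbound : IntegrableOn (fun x : ℝ => 2 * α * x ^ (-(2 * α) - 1)) (Ioi 1) volume :=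
    (integrableOn_Ioi_rpow_of_lt (by linarith) one_pos).const_mul (2 * α)
  refine hbound.mono' ?_ ?_
  · apply Measurable.aestronglyMeasurable
    fun_prop
  · filter_upwards [ae_restrict_mem measurableSet_Ioi] with x hx
    have hx0 : (0:ℝ) < x := lt_trans one_pos hx
    have h1 : 0 ≤ 2 * α * x ^ (-(2 * α) - 1) := by positivity
    have h2 : (0:ℝ) ≤ max (1 - c * x ^ α) 0 := le_max_right _ _
    have h3 : max (1 - c * x ^ α) 0 ≤ 1 := by
      have : 0 ≤ c * x ^ α := mul_nonneg hc (Real.rpow_nonneg hx0.le α)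
      apply max_le (by linarith) zero_le_one
    rw [Real.norm_eq_abs, abs_of_nonneg (by positivity)]
    nlinarith

/-- Value of the Pareto integral. -/
lemma J_eval (α c : ℝ) (hα : 0 < α) (hc : 0 ≤ c) :
    ∫ x in Ioi (1:ℝ), 2 * α * x ^ (-(2 * α) - 1) * max (1 - c * x ^ α) 0
      = (max (1 - c) 0) ^ 2 := by
  rcases le_or_gt 1 c with h1 | h1
  · -- everything vanishes
    rw [max_eq_right (by linarith)]
    have hz : EqOn (fun x : ℝ => 2 * α * x ^ (-(2 * α) - 1) * max (1 - c * x ^ α) 0)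
        (fun _ => (0:ℝ)) (Ioi 1) := by
      intro x hx
      have hx0 : (0:ℝ) < x := lt_trans one_pos hx
      have hxa : 1 < x ^ α := (Real.one_lt_rpow_iff_of_pos hx0).2 (Or.inl ⟨hx, hα⟩)
      have : 1 ≤ c * x ^ α := by nlinarith
      simp only [max_eq_right (by linarith : 1 - c * x ^ α ≤ 0)]
      ring
    rw [setIntegral_congr_fun measurableSet_Ioi hz]
    simp
  · rcases eq_or_lt_of_le hc with h0 | h0
    · -- c = 0
      subst h0
      rw [max_eq_left (by norm_num)]
      have hz : EqOn (fun x : ℝ => 2 * α * x ^ (-(2 * α) - 1) * max (1 - 0 * x ^ α) 0)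
          (fun x : ℝ => 2 * α * x ^ (-(2 * α) - 1)) (Ioi 1) := by
        intro x hx; simp
      rw [setIntegral_congr_fun measurableSet_Ioi hz, MeasureTheory.integral_const_mul,
        integral_Ioi_rpow_of_lt (by linarith) one_pos]
      rw [Real.one_rpow]
      field_simp
      ring
    · -- 0 < c < 1
      set R : ℝ := c ^ (-1 / α) with hR
      have hRpos : 0 < R := Real.rpow_pos_of_pos h0 _
      have hR1 : 1 < R := by
        rw [hR]
        exact (Real.one_lt_rpow_iff_of_pos h0).2
          (Or.inr ⟨h1, by simpa using div_neg_of_neg_of_pos (by norm_num : (-1:ℝ) < 0) hα⟩)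
      have hRα : R ^ α = c⁻¹ := by
        rw [hR, ← Real.rpow_mul h0.le]
        have : -1 / α * α = -1 := by field_simp
        rw [this, Real.rpow_neg_one]
      have hRnα : R ^ (-α) = c := by
        rw [Real.rpow_neg hRpos.le, hRα, inv_inv]
      set φ : ℝ → ℝ := fun x => 2 * α * x ^ (-(2 * α) - 1) - 2 * α * c * x ^ (-α - 1) with hφ
      have key : EqOn (fun x : ℝ => 2 * α * x ^ (-(2 * α) - 1) * max (1 - c * x ^ α) 0)
          ((Ioc 1 R).indicator φ) (Ioi 1) := by
        intro x hx
        have hx0 : (0:ℝ) < x := lt_trans one_pos hx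
        rcases le_or_gt x R with hxR | hxR
        · have hmem : x ∈ Ioc 1 R := ⟨hx, hxR⟩
          have hle : c * x ^ α ≤ 1 := by
            have := Real.rpow_le_rpow hx0.le hxR hα.le
            rw [hRα] at this
            calc c * x ^ α ≤ c * c⁻¹ := by nlinarith
              _ = 1 := mul_inv_cancel₀ h0.ne'
          have hmax : max (1 - c * x ^ α) 0 = 1 - c * x ^ α := max_eq_left (by linarith)
          have hsplit : x ^ (-(2 * α) - 1) * x ^ α = x ^ (-α - 1) := by
            rw [← Real.rpow_add hx0]; ring_nf
          simp only [indicator_of_mem hmem, hφ, hmax]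
          linear_combination (-(2 * α * c)) * hsplit
        · have hmem : x ∉ Ioc 1 R := fun h => absurd h.2 (not_le.2 hxR)
          have hgt : 1 < c * x ^ α := by
            have := Real.rpow_lt_rpow hRpos.le hxR hα
            rw [hRα] at this
            calc 1 = c * c⁻¹ := (mul_inv_cancel₀ h0.ne').symm
              _ < c * x ^ α := by nlinarith
          have hmax : max (1 - c * x ^ α) 0 = 0 := max_eq_right (by linarith)
          simp [indicator_of_notMem hmem, hmax]
      rw [setIntegral_congr_fun measurableSet_Ioi key,
        setIntegral_indicator measurableSet_Ioc,
        inter_eq_self_of_subset_right Ioc_subset_Ioi_self,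
        ← intervalIntegral.integral_of_le hR1.le]
      have hderiv : ∀ x ∈ uIcc (1:ℝ) R,
          HasDerivAt (fun x : ℝ => -(x ^ (-(2 * α))) + 2 * c * x ^ (-α)) (φ x) x := by
        intro x hx
        rw [uIcc_of_le hR1.le] at hx
        have hx0 : x ≠ 0 := by
          have : (1:ℝ) ≤ x := hx.1
          positivity
        have d1 := (Real.hasDerivAt_rpow_const (p := -(2*α)) (Or.inl hx0)).neg
        have d2 := (Real.hasDerivAt_rpow_const (p := -α) (Or.inl hx0)).const_mul (2*c)
        have := d1.add d2
        refine this.congr_deriv ?_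
        rw [hφ]
        ring_nf
      have hcont : IntervalIntegrable φ volume 1 R := by
        apply ContinuousOn.intervalIntegrable
        rw [uIcc_of_le hR1.le]
        intro x hx
        have hx0 : x ≠ 0 := by
          have : (1:ℝ) ≤ x := hx.1
          positivity
        have c1 : ContinuousWithinAt (fun x : ℝ => x ^ (-(2*α) - 1)) (Icc 1 R) x :=
          (Real.continuousAt_rpow_const x _ (Or.inl hx0)).continuousWithinAt
        have c2 : ContinuousWithinAt (fun x : ℝ => x ^ (-α - 1)) (Icc 1 R) x :=
          (Real.continuousAt_rpow_const x _ (Or.inl hx0)).continuousWithinAt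
        exact ((c1.const_smul (2*α)).sub (c2.const_smul (2*α*c)) : )
      rw [intervalIntegral.integral_eq_sub_of_hasDerivAt hderiv hcont]
      have hRn2α : R ^ (-(2 * α)) = c ^ 2 := by
        have : -(2 * α) = (-α) * 2 := by ring
        rw [this, Real.rpow_mul hRpos.le, hRnα]
        norm_num
      rw [hRn2α, hRnα, Real.one_rpow, Real.one_rpow,
        max_eq_left (by linarith : (0:ℝ) ≤ 1 - c)]
      ring

lemma paretoDens_meas (α : ℝ) :
    Measurable fun x : ℝ => ENNReal.ofReal (if 1 < x then 2 * α * x ^ (-(2 * α) - 1) else 0) := by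
  apply Measurable.ennreal_ofReal
  exact Measurable.ite measurableSet_Ioi (by fun_prop) measurable_const


lemma pareto_lint (α t b : ℝ) (hα : 0 < α) (ht : 0 ≤ t) (hb : 0 < b) :
    ∫⁻ x, ENNReal.ofReal (max (1 - (t * (b * x)) ^ α) 0) ∂(pareto α)
      = (ENNReal.ofReal (max (1 - (t * b) ^ α) 0)) ^ 2 := by
  set c := (t * b) ^ α with hcdef
  have hc : 0 ≤ c := Real.rpow_nonneg (by positivity) _
  rw [pareto, lintegral_withDensity_eq_lintegral_mul volume (paretoDens_meas α) (by fun_prop)]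
  have hpt : ∀ x : ℝ,
      ((fun x : ℝ => ENNReal.ofReal (if 1 < x then 2 * α * x ^ (-(2 * α) - 1) else 0)) *
        fun x : ℝ => ENNReal.ofReal (max (1 - (t * (b * x)) ^ α) 0)) x
      = (Ioi (1:ℝ)).indicator
          (fun x => ENNReal.ofReal (2 * α * x ^ (-(2 * α) - 1) * max (1 - c * x ^ α) 0)) x := by
    intro x
    by_cases hx : x ∈ Ioi (1:ℝ)
    · have hx1 : (1:ℝ) < x := mem_Ioi.1 hx
      have hx0 : (0:ℝ) < x := lt_trans one_pos hx1
      have harg : (t * (b * x)) ^ α = c * x ^ α := by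
        rw [hcdef, ← Real.mul_rpow (by positivity) hx0.le]
        ring_nf
      rw [Pi.mul_apply, if_pos hx1, indicator_of_mem hx, harg,
        ENNReal.ofReal_mul (by positivity : (0:ℝ) ≤ 2 * α * x ^ (-(2 * α) - 1))]
    · have hx1 : ¬ (1:ℝ) < x := fun h => hx (mem_Ioi.2 h)
      rw [Pi.mul_apply, if_neg hx1, indicator_of_notMem hx]
      simp
  rw [lintegral_congr hpt, lintegral_indicator measurableSet_Ioi,
    ← ofReal_integral_eq_lintegral_ofReal (J_integrable α c hα hc) ?_]
  · rw [J_eval α c hα hc, ENNReal.ofReal_pow (le_max_right _ _)]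
  · filter_upwards [ae_restrict_mem measurableSet_Ioi] with x hx
    have hx0 : (0:ℝ) < x := lt_trans one_pos hx
    exact mul_nonneg (by positivity) (le_max_right _ _)

lemma pareto_finite (α : ℝ) (hα : 0 < α) : IsFiniteMeasure (pareto α) := by
  constructor
  rw [pareto, withDensity_apply _ MeasurableSet.univ, Measure.restrict_univ]
  have hpt : ∀ x : ℝ, ENNReal.ofReal (if 1 < x then 2 * α * x ^ (-(2 * α) - 1) else 0)
      = (Ioi (1:ℝ)).indicator (fun x => ENNReal.ofReal (2 * α * x ^ (-(2 * α) - 1))) x := by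
    intro x
    by_cases hx : x ∈ Ioi (1:ℝ)
    · rw [if_pos (mem_Ioi.1 hx), indicator_of_mem hx]
    · rw [if_neg (fun h => hx (mem_Ioi.2 h)), indicator_of_notMem hx]
      simp
  rw [lintegral_congr hpt, lintegral_indicator measurableSet_Ioi,
    ← ofReal_integral_eq_lintegral_ofReal
      ((integrableOn_Ioi_rpow_of_lt (by linarith) one_pos).const_mul (2 * α)) ?_]
  · exact ENNReal.ofReal_lt_top
  · filter_upwards [ae_restrict_mem measurableSet_Ioi] with x hx
    have hx0 : (0:ℝ) < x := lt_trans one_pos hx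
    positivity

lemma lint_kernelLe (α t a b : ℝ) (hα : 0 < α) (ht : 0 ≤ t) (h0 : 0 ≤ a) (hab : a ≤ b) :
    ∫⁻ s, ENNReal.ofReal (max (1 - (t * s) ^ α) 0) ∂(kendallKernelLe α a b)
      = ENNReal.ofReal (max (1 - (t * a) ^ α) 0) * ENNReal.ofReal (max (1 - (t * b) ^ α) 0) := by
  rcases eq_or_lt_of_le (h0.trans hab) with hb0 | hb0
  · have hb : b = 0 := hb0.symm
    have ha : a = 0 := le_antisymm (hb ▸ hab) h0
    subst hb; subst ha
    rw [kendallKernelLe, if_pos rfl, lintegral_dirac' _ (KG_meas α t)]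
    simp [Real.zero_rpow hα.ne']
  · rw [kendallKernelLe, if_neg hb0.ne',
      lintegral_add_measure, lintegral_smul_measure, lintegral_smul_measure,
      lintegral_dirac' _ (KG_meas α t),
      lintegral_map (KG_meas α t) (measurable_const_mul b),
      pareto_lint α t b hα ht hb0]
    set p := (a / b) ^ α with hp
    set cb := (t * b) ^ α with hcb
    have hdiv : 0 ≤ a / b := div_nonneg h0 hb0.le
    have hp0 : 0 ≤ p := Real.rpow_nonneg hdiv _
    have hp1 : p ≤ 1 := Real.rpow_le_one hdiv ((div_le_one hb0).2 hab) hα.le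
    have hcb0 : 0 ≤ cb := Real.rpow_nonneg (by positivity) _
    have hA : (t * a) ^ α = p * cb := by
      rw [hp, hcb, ← Real.mul_rpow hdiv (by positivity)]
      congr 1
      field_simp
    rw [hA, smul_eq_mul, smul_eq_mul, ← ENNReal.ofReal_pow (le_max_right _ _),
      ← ENNReal.ofReal_mul (by linarith : (0:ℝ) ≤ 1 - p),
      ← ENNReal.ofReal_mul hp0,
      ← ENNReal.ofReal_add (mul_nonneg (by linarith) (le_max_right _ _))
        (mul_nonneg hp0 (by positivity)),
      ← ENNReal.ofReal_mul (le_max_right _ _)]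
    congr 1
    rcases le_or_gt cb 1 with h | h
    · rw [max_eq_left (by linarith : (0:ℝ) ≤ 1 - cb),
        max_eq_left (by nlinarith : (0:ℝ) ≤ 1 - p * cb)]
      ring
    · rw [max_eq_right (by linarith : 1 - cb ≤ (0:ℝ))]
      ring

lemma lint_kernel (α t x y : ℝ) (hα : 0 < α) (ht : 0 ≤ t) (hx : 0 ≤ x) (hy : 0 ≤ y) :
    ∫⁻ s, ENNReal.ofReal (max (1 - (t * s) ^ α) 0) ∂(kendallKernel α x y)
      = ENNReal.ofReal (max (1 - (t * x) ^ α) 0) * ENNReal.ofReal (max (1 - (t * y) ^ α) 0) := by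
  rw [kendallKernel, lint_kernelLe α t _ _ hα ht (le_min hx hy) (min_le_max)]
  rcases le_total x y with h | h
  · rw [min_eq_left h, max_eq_right h]
  · rw [min_eq_right h, max_eq_left h, mul_comm]

lemma pareto_Iio (α : ℝ) : pareto α (Iio 0) = 0 := by
  rw [pareto, withDensity_apply _ measurableSet_Iio]
  rw [setLIntegral_congr_fun measurableSet_Iio
    (fun x hx => by
      rw [if_neg (by linarith [mem_Iio.1 hx] : ¬ (1:ℝ) < x)])]
  simp

lemma kernel_Iio (α x y : ℝ) (hx : 0 ≤ x) (hy : 0 ≤ y) :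
    kendallKernel α x y (Iio 0) = 0 := by
  rw [kendallKernel]
  set a := min x y
  set b := max x y with hb
  have hb0 : 0 ≤ b := le_trans hx (le_max_left _ _)
  rcases eq_or_lt_of_le hb0 with h | h
  · rw [kendallKernelLe, if_pos h.symm, Measure.dirac_apply' _ measurableSet_Iio]
    simp
  · rw [kendallKernelLe, if_neg h.ne', Measure.coe_add, Pi.add_apply,
      Measure.smul_apply, Measure.smul_apply,
      Measure.dirac_apply' _ measurableSet_Iio,
      Measure.map_apply (measurable_const_mul b) measurableSet_Iio]
    have h1 : b ∉ Iio (0:ℝ) := by simp [not_lt.2 hb0]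
    have h2 : (fun x : ℝ => b * x) ⁻¹' (Iio 0) = Iio 0 := by
      ext z
      simp only [mem_preimage, mem_Iio]
      constructor
      · intro hz; nlinarith
      · intro hz; exact mul_neg_of_pos_of_neg h hz
    rw [indicator_of_notMem h1, h2, pareto_Iio]
    simp

/-- Measurability of the Kendall kernel as a map `ℝ × ℝ → Measure ℝ`. -/
lemma kernel_core_meas (α : ℝ) (hα : 0 < α) :
    Measurable (Function.uncurry (kendallKernel α)) := by
  apply Measure.measurable_of_measurable_coe
  intro s hs
  have hrw : ∀ p : ℝ × ℝ, Function.uncurry (kendallKernel α) p s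
      = if max p.1 p.2 = 0 then s.indicator 1 (0:ℝ)
        else ENNReal.ofReal (1 - (min p.1 p.2 / max p.1 p.2) ^ α) * s.indicator 1 (max p.1 p.2)
          + ENNReal.ofReal ((min p.1 p.2 / max p.1 p.2) ^ α)
              * ∫⁻ z, s.indicator 1 (max p.1 p.2 * z) ∂(pareto α) := by
    intro p
    rw [Function.uncurry, kendallKernel, kendallKernelLe]
    split_ifs with h
    · rw [Measure.dirac_apply' _ hs]
    · rw [Measure.coe_add, Pi.add_apply, Measure.smul_apply, Measure.smul_apply,
        Measure.dirac_apply' _ hs,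
        Measure.map_apply (measurable_const_mul _) hs, smul_eq_mul, smul_eq_mul]
      congr 1
      have : ∀ u : Set ℝ, MeasurableSet u → pareto α u = ∫⁻ z, u.indicator 1 z ∂(pareto α) :=
        fun u hu => (lintegral_indicator_one hu).symm
      rw [this _ ((measurable_const_mul _) hs)]
      congr 1
  simp only [hrw]
  have hmax : Measurable fun p : ℝ × ℝ => max p.1 p.2 := measurable_fst.max measurable_snd
  have hmin : Measurable fun p : ℝ × ℝ => min p.1 p.2 := measurable_fst.min measurable_snd
  have hind : Measurable (s.indicator (1 : ℝ → ENNReal)) := measurable_one.indicator hs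
  haveI : IsFiniteMeasure (pareto α) := pareto_finite α hα
  apply Measurable.ite (hmax (measurableSet_singleton 0)) measurable_const
  apply Measurable.add
  · exact (by fun_prop :
        Measurable fun p : ℝ × ℝ => ENNReal.ofReal (1 - (min p.1 p.2 / max p.1 p.2) ^ α)).mul
      (hind.comp hmax)
  · refine (by fun_prop :
        Measurable fun p : ℝ × ℝ => ENNReal.ofReal ((min p.1 p.2 / max p.1 p.2) ^ α)).mul ?_
    have : Measurable fun q : ℝ × ℝ => ∫⁻ z, s.indicator 1 (max q.1 q.2 * z) ∂(pareto α) := by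
      apply Measurable.lintegral_prod_right' (f := fun q : (ℝ × ℝ) × ℝ =>
        s.indicator 1 (max q.1.1 q.1.2 * q.2))
      exact hind.comp ((hmax.comp measurable_fst).mul measurable_snd)
    exact this

lemma kernel_meas_left (α : ℝ) (hα : 0 < α) (x : ℝ) :
    Measurable fun y => kendallKernel α x y :=
  (kernel_core_meas α hα).comp (measurable_const.prodMk measurable_id)

lemma bind_kernel_meas (α : ℝ) (hα : 0 < α) (ν : Measure ℝ) [SFinite ν] :
    Measurable fun x => ν.bind fun y => kendallKernel α x y := by
  apply Measure.measurable_of_measurable_coe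
  intro s hs
  have heq : ∀ x, (ν.bind fun y => kendallKernel α x y) s = ∫⁻ y, kendallKernel α x y s ∂ν :=
    fun x => Measure.bind_apply hs (kernel_meas_left α hα x).aemeasurable
  simp only [heq]
  apply Measurable.lintegral_prod_right' (f := fun p : ℝ × ℝ => kendallKernel α p.1 p.2 s)
  exact (Measure.measurable_coe hs).comp (kernel_core_meas α hα)

lemma ae_nonneg_of_Iio (m : Measure ℝ) (hm : m (Iio 0) = 0) : ∀ᵐ x ∂m, 0 ≤ x := by
  rw [ae_iff]
  have : {x : ℝ | ¬ 0 ≤ x} = Iio 0 := by ext x; simp [not_le]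
  rw [this]
  exact hm

lemma lint_conv (α t : ℝ) (hα : 0 < α) (ht : 0 ≤ t) (m ν : Measure ℝ) [SFinite ν]
    (hm : m (Iio 0) = 0) (hν : ν (Iio 0) = 0) :
    (∫⁻ s, ENNReal.ofReal (max (1 - (t * s) ^ α) 0) ∂(kendallConv α m ν)
      = (∫⁻ s, ENNReal.ofReal (max (1 - (t * s) ^ α) 0) ∂m)
        * ∫⁻ s, ENNReal.ofReal (max (1 - (t * s) ^ α) 0) ∂ν)
      ∧ kendallConv α m ν (Iio 0) = 0 := by
  have ham := ae_nonneg_of_Iio m hm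
  have haν := ae_nonneg_of_Iio ν hν
  constructor
  · rw [kendallConv, Measure.lintegral_bind (bind_kernel_meas α hα ν).aemeasurable (KG_meas α t).aemeasurable]
    have h1 : ∀ᵐ x ∂m,
        (∫⁻ s, ENNReal.ofReal (max (1 - (t * s) ^ α) 0) ∂(ν.bind fun y => kendallKernel α x y))
        = ENNReal.ofReal (max (1 - (t * x) ^ α) 0)
            * ∫⁻ s, ENNReal.ofReal (max (1 - (t * s) ^ α) 0) ∂ν := by
      filter_upwards [ham] with x hx
      rw [Measure.lintegral_bind (kernel_meas_left α hα x).aemeasurable (KG_meas α t).aemeasurable,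
        lintegral_congr_ae (haν.mono fun y hy => lint_kernel α t x y hα ht hx hy),
        lintegral_const_mul _ (KG_meas α t)]
    rw [lintegral_congr_ae h1, lintegral_mul_const _ (KG_meas α t)]
  · rw [kendallConv, Measure.bind_apply measurableSet_Iio (bind_kernel_meas α hα ν).aemeasurable]
    have h1 : ∀ᵐ x ∂m, (ν.bind fun y => kendallKernel α x y) (Iio 0) = 0 := by
      filter_upwards [ham] with x hx
      rw [Measure.bind_apply measurableSet_Iio (kernel_meas_left α hα x).aemeasurable,
        lintegral_congr_ae (haν.mono fun y hy => kernel_Iio α x y hx hy), lintegral_zero]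
    rw [lintegral_congr_ae h1, lintegral_zero]

end Aux

/-- For every probability measure `ν` on `[0,∞)`, every `α > 0`, every `n : ℕ` and
`t ≥ 0`, the Kendall–Williamson transform of the `n`-fold Kendall convolution power
of `ν` satisfies `Φ_{ν^{△_α n}}(t) = (Φ_ν(t))^n`. -/
theorem williamson_kendallPow
    (ν : Measure ℝ) [IsProbabilityMeasure ν] (hν : ν (Set.Iio 0) = 0)
    (α : ℝ) (hα : 0 < α) (n : ℕ) (t : ℝ) (ht : 0 ≤ t) :
    williamson α (kendallPow α ν n) t = (williamson α ν t) ^ n := by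
  have hrepr : ∀ μ : Measure ℝ,
      williamson α μ t = (∫⁻ s, ENNReal.ofReal (max (1 - (t * s) ^ α) 0) ∂μ).toReal := by
    intro μ
    rw [williamson]
    exact integral_eq_lintegral_of_nonneg_ae (ae_of_all _ fun s => le_max_right _ _)
      ((by fun_prop : Measurable fun s : ℝ => max (1 - (t * s) ^ α) 0).aestronglyMeasurable)
  have hind : ∀ k : ℕ, kendallPow α ν k (Iio 0) = 0 ∧
      ∫⁻ s, ENNReal.ofReal (max (1 - (t * s) ^ α) 0) ∂(kendallPow α ν k)
        = (∫⁻ s, ENNReal.ofReal (max (1 - (t * s) ^ α) 0) ∂ν) ^ k := by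
    intro k
    induction k with
    | zero =>
      constructor
      · simp only [kendallPow]
        rw [Measure.dirac_apply' _ measurableSet_Iio]
        simp
      · simp only [kendallPow]
        rw [lintegral_dirac' _ (KG_meas α t)]
        simp [Real.zero_rpow hα.ne']
    | succ k ih =>
      have h := lint_conv α t hα ht (kendallPow α ν k) ν ih.1 hν
      refine ⟨h.2, ?_⟩
      simp only [kendallPow]
      rw [h.1, ih.2, pow_succ]
  have hL : ∫⁻ s, ENNReal.ofReal (max (1 - (t * s) ^ α) 0) ∂ν ≠ ⊤ := by
    have hb : ∫⁻ s, ENNReal.ofReal (max (1 - (t * s) ^ α) 0) ∂ν ≤ 1 := by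
      have hae : ∀ᵐ s ∂ν, ENNReal.ofReal (max (1 - (t * s) ^ α) 0) ≤ 1 := by
        filter_upwards [ae_nonneg_of_Iio ν hν] with s hs
        apply ENNReal.ofReal_le_one.2
        have : 0 ≤ (t * s) ^ α := Real.rpow_nonneg (by positivity) _
        exact max_le (by linarith) zero_le_one
      calc ∫⁻ s, ENNReal.ofReal (max (1 - (t * s) ^ α) 0) ∂ν ≤ ∫⁻ _, 1 ∂ν :=
            lintegral_mono_ae hae
        _ = 1 := by simp
    exact (lt_of_le_of_lt hb ENNReal.one_lt_top).ne
  rw [hrepr, hrepr, (hind n).2, ENNReal.toReal_pow]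
end

section
/- For every α > 0 and every integer n ≥ 2, the n-fold Kendall convolution power δ_1^{△_α n} is absolutely continuous with respect to Lebesgue measure with density x ↦ α n (n−1) x^{−2α−1} (1 − x^{−α})^{n−2} 1_{(1,∞)}(x); equivalently, δ_1^{△_α n}([0,x]) = (1 + (n−1)x^{−α}) (1 − x^{−α})_+^{n−1} for all x > 0. In particular, δ_1^{△_α 2} = π_{2α}. -/
open MeasureTheory Set

namespace KendallAux

lemma measurable_rpow_const (c : ℝ) : Measurable fun x : ℝ => x ^ c := by
  have h : (fun x : ℝ => x ^ c) = fun x : ℝ =>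
      if 0 < x then Real.exp (Real.log x * c)
      else if x = 0 then (if c = 0 then 1 else 0)
      else Real.exp (Real.log x * c) * Real.cos (c * Real.pi) := by
    funext x
    rcases lt_trichotomy x 0 with hx | hx | hx
    · rw [if_neg (by linarith), if_neg hx.ne, Real.rpow_def_of_neg hx]
    · subst hx
      rw [if_neg (lt_irrefl 0), if_pos rfl]
      by_cases hc : c = 0
      · simp [hc]
      · simp [hc, Real.zero_rpow hc]
    · rw [if_pos hx, Real.rpow_def_of_pos hx]
  rw [h]
  apply Measurable.ite (measurableSet_lt measurable_const measurable_id)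
  · exact Real.measurable_exp.comp (Real.measurable_log.mul_const c)
  · exact Measurable.ite (measurableSet_eq_fun measurable_id measurable_const)
      measurable_const
      ((Real.measurable_exp.comp (Real.measurable_log.mul_const c)).mul_const _)

/-- density of the pareto measure -/
noncomputable def pdens (α : ℝ) : ℝ → ENNReal :=
  fun x => ENNReal.ofReal (if 1 < x then 2 * α * x ^ (-(2 * α) - 1) else 0)

lemma measurable_pdens (α : ℝ) : Measurable (pdens α) := by
  apply Measurable.ennreal_ofReal
  exact Measurable.ite measurableSet_Ioi
    ((measurable_rpow_const _).const_mul _) measurable_const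

lemma measurable_scale_map (α : ℝ) :
    Measurable (fun b : ℝ => Measure.map (fun x => b * x) (pareto α)) := by
  rw [Measure.measurable_measure]
  intro s hs
  have key : ∀ b : ℝ, (Measure.map (fun x => b * x) (pareto α)) s
      = ∫⁻ y, s.indicator (fun _ => (1 : ENNReal)) (b * y) * pdens α y := by
    intro b
    rw [Measure.map_apply (measurable_const_mul b) hs, pareto,
      withDensity_apply _ (hs.preimage (measurable_const_mul b)),
      ← lintegral_indicator (hs.preimage (measurable_const_mul b))]
    congr 1
    funext y
    by_cases hy : b * y ∈ s
    · simp [Set.indicator_of_mem, hy,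
        Set.indicator_of_mem (show y ∈ (fun x => b*x) ⁻¹' s from hy), pdens]
    · simp [Set.indicator_of_notMem, hy,
        Set.indicator_of_notMem (show y ∉ (fun x => b*x) ⁻¹' s from hy), pdens]
  simp only [key]
  apply Measurable.lintegral_prod_right
    (f := fun b y => s.indicator (fun _ => (1:ENNReal)) (b*y) * pdens α y)
  apply Measurable.mul
  · exact (measurable_const.indicator hs).comp (measurable_fst.mul measurable_snd)
  · exact (measurable_pdens α).comp measurable_snd

lemma measurable_kernel (α c : ℝ) : Measurable (fun x => kendallKernel α x c) := by
  rw [Measure.measurable_measure]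
  intro s hs
  have hmax : Measurable fun x : ℝ => max x c := measurable_id.max measurable_const
  have hmin : Measurable fun x : ℝ => min x c := measurable_id.min measurable_const
  have key : ∀ x : ℝ, (kendallKernel α x c) s =
      if max x c = 0 then Measure.dirac (0:ℝ) s
      else ENNReal.ofReal (1 - (min x c / max x c) ^ α)
            * s.indicator (fun _ => (1:ENNReal)) (max x c)
        + ENNReal.ofReal ((min x c / max x c) ^ α)
            * (Measure.map (fun y => (max x c) * y) (pareto α)) s := by
    intro x
    unfold kendallKernel kendallKernelLe
    split_ifs with h
    · rfl
    · rw [Measure.add_apply, Measure.smul_apply, Measure.smul_apply, smul_eq_mul,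
        smul_eq_mul, Measure.dirac_apply' _ hs]
      rfl
  simp only [key]
  apply Measurable.ite (hmax (measurableSet_singleton 0)) measurable_const
  apply Measurable.add
  · apply Measurable.mul
    · exact Measurable.ennreal_ofReal <| measurable_const.sub <|
        (measurable_rpow_const α).comp (hmin.div hmax)
    · exact (measurable_const.indicator hs).comp hmax
  · apply Measurable.mul
    · exact Measurable.ennreal_ofReal <| (measurable_rpow_const α).comp (hmin.div hmax)
    · exact (Measure.measurable_coe hs).comp ((measurable_scale_map α).comp hmax)

lemma kendallKernel_comm (α x y : ℝ) : kendallKernel α x y = kendallKernel α y x := by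
  unfold kendallKernel; rw [min_comm, max_comm]

lemma conv_dirac (α : ℝ) (lam : Measure ℝ) :
    kendallConv α lam (Measure.dirac 1) = lam.bind (fun x => kendallKernel α x 1) := by
  unfold kendallConv
  congr 1
  funext x
  have h : (fun y => kendallKernel α x y) = fun y => kendallKernel α y x := by
    funext y; exact kendallKernel_comm α x y
  rw [h, Measure.dirac_bind (measurable_kernel α x), kendallKernel_comm]

/-- `fk α k` is the density of the `(k+2)`-fold power. -/
noncomputable def fk (α : ℝ) (k : ℕ) (x : ℝ) : ℝ :=
  α * ((k : ℝ) + 2) * ((k : ℝ) + 1) * x ^ (-(2 * α) - 1) * (1 - x ^ (-α)) ^ k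

variable {α : ℝ}

/-- Antiderivative lemma. -/
lemma hasDerivAt_H (k : ℕ) (c : ℝ) {x : ℝ} (hx : 0 < x) :
    HasDerivAt (fun y : ℝ => (1 + ((k : ℝ) + 1) * y ^ (-α)) * (1 - y ^ (-α)) ^ (k + 1)
        - c * ((k : ℝ) + 2) * (1 - y ^ (-α)) ^ (k + 1))
      (fk α k x * (1 - x ^ α * c)) x := by
  have hu : HasDerivAt (fun y : ℝ => y ^ (-α)) (-α * x ^ (-α - 1)) x :=
    Real.hasDerivAt_rpow_const (Or.inl hx.ne')
  have h1 : HasDerivAt (fun y : ℝ => 1 + ((k : ℝ) + 1) * y ^ (-α))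
      (((k : ℝ) + 1) * (-α * x ^ (-α - 1))) x := (hu.const_mul _).const_add 1
  have h2 : HasDerivAt (fun y : ℝ => (1 - y ^ (-α)) ^ (k + 1))
      ((((k:ℕ):ℝ) + 1) * (1 - x ^ (-α)) ^ k * (-(-α * x ^ (-α - 1)) )) x := by
    have := ((hu.const_sub 1).fun_pow (k + 1))
    simpa using this
  have H := (h1.mul h2).sub ((h2.const_mul (c * ((k : ℝ) + 2))))
  refine H.congr_deriv (Eq.symm ?_)
  have hB : x ^ (-(2*α) - 1) = x ^ (-α) * x ^ (-α - 1) := by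
    rw [← Real.rpow_add hx]; ring_nf
  have hC : x ^ (-(2*α) - 1) * x ^ α = x ^ (-α - 1) := by
    rw [← Real.rpow_add hx]; ring_nf
  unfold fk
  have hpow : (1 - x ^ (-α)) ^ (k + 1) = (1 - x ^ (-α)) ^ k * (1 - x ^ (-α)) := pow_succ _ _
  rw [hpow]
  linear_combination (α*((k:ℝ)+2)*((k:ℝ)+1)*(1 - x ^ (-α))^k) * hB
    - (α*((k:ℝ)+2)*((k:ℝ)+1)*c*(1 - x ^ (-α))^k) * hC

lemma continuousAt_fk (k : ℕ) (c : ℝ) {x : ℝ} (hx : x ≠ 0) :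
    ContinuousAt (fun y : ℝ => fk α k y * (1 - y ^ α * c)) x := by
  have h1 : ContinuousAt (fun y : ℝ => y ^ (-(2*α) - 1)) x :=
    Real.continuousAt_rpow_const x _ (Or.inl hx)
  have h2 : ContinuousAt (fun y : ℝ => y ^ (-α)) x :=
    Real.continuousAt_rpow_const x _ (Or.inl hx)
  have h3 : ContinuousAt (fun y : ℝ => y ^ α) x :=
    Real.continuousAt_rpow_const x _ (Or.inl hx)
  unfold fk
  exact ((((continuousAt_const.mul h1).mul
    (((continuousAt_const.sub h2)).pow k))).mul
    (continuousAt_const.sub (h3.mul continuousAt_const)))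

lemma integral_fk (k : ℕ) (c : ℝ) {t : ℝ} (ht : 1 < t) :
    ∫ x in Ioc 1 t, fk α k x * (1 - x ^ α * c)
      = (1 + ((k:ℝ) + 1) * t ^ (-α)) * (1 - t ^ (-α)) ^ (k + 1)
        - c * ((k:ℝ) + 2) * (1 - t ^ (-α)) ^ (k + 1) := by
  rw [← intervalIntegral.integral_of_le ht.le]
  have h := intervalIntegral.integral_eq_sub_of_hasDerivAt
    (f := fun y : ℝ => (1 + ((k : ℝ) + 1) * y ^ (-α)) * (1 - y ^ (-α)) ^ (k + 1)
        - c * ((k : ℝ) + 2) * (1 - y ^ (-α)) ^ (k + 1))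
    (f' := fun x => fk α k x * (1 - x ^ α * c)) (a := 1) (b := t)
    (fun x hx => by
      rw [uIcc_of_le ht.le] at hx
      exact hasDerivAt_H k c (lt_of_lt_of_le one_pos hx.1))
    (by
      apply ContinuousOn.intervalIntegrable
      intro x hx
      rw [uIcc_of_le ht.le] at hx
      exact (continuousAt_fk k c (lt_of_lt_of_le one_pos hx.1).ne').continuousWithinAt)
  rw [h]
  simp [Real.one_rpow]

noncomputable def dens (α : ℝ) (k : ℕ) : ℝ → ENNReal :=
  fun x => ENNReal.ofReal (if 1 < x then fk α k x else 0)

lemma dens_eq_indicator (k : ℕ) :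
    dens α k = (Ioi 1).indicator (fun x => ENNReal.ofReal (fk α k x)) := by
  funext x
  by_cases hx : 1 < x
  · simp [dens, hx, Set.indicator_of_mem (show x ∈ Ioi 1 from hx)]
  · simp [dens, hx, Set.indicator_of_notMem (show x ∉ Ioi 1 from hx)]

lemma measurable_dens (k : ℕ) : Measurable (dens α k) := by
  apply Measurable.ennreal_ofReal
  apply Measurable.ite measurableSet_Ioi _ measurable_const
  unfold fk
  exact (((measurable_rpow_const _).const_mul _).mul
    ((measurable_const.sub (measurable_rpow_const _)).pow_const k))

lemma fk_nonneg (hα : 0 < α) (k : ℕ) {x : ℝ} (hx : 1 ≤ x) : 0 ≤ fk α k x := by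
  have h0 : (0:ℝ) < x := lt_of_lt_of_le one_pos hx
  have h1 : x ^ (-α) ≤ 1 :=
    Real.rpow_le_one_of_one_le_of_nonpos hx (neg_nonpos.mpr hα.le)
  unfold fk
  have h2 : (0:ℝ) ≤ 1 - x ^ (-α) := by linarith
  exact mul_nonneg (mul_nonneg (by positivity) (Real.rpow_nonneg h0.le _)) (pow_nonneg h2 k)

lemma lint_Ioc (hα : 0 < α) (k : ℕ) {t c : ℝ} (ht : 1 < t) (hc : 0 ≤ c)
    (hct : t ^ α * c ≤ 1) :
    ∫⁻ x in Ioc 1 t, ENNReal.ofReal (fk α k x * (1 - x ^ α * c))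
      = ENNReal.ofReal ((1 + ((k:ℝ) + 1) * t ^ (-α)) * (1 - t ^ (-α)) ^ (k + 1)
        - c * ((k:ℝ) + 2) * (1 - t ^ (-α)) ^ (k + 1)) := by
  rw [← ofReal_integral_eq_lintegral_ofReal, integral_fk k c ht]
  · apply IntegrableOn.mono_set _ Ioc_subset_Icc_self
    apply ContinuousOn.integrableOn_Icc
    intro x hx
    exact (continuousAt_fk k c (lt_of_lt_of_le one_pos hx.1).ne').continuousWithinAt
  · filter_upwards [self_mem_ae_restrict measurableSet_Ioc] with x hx
    have hx0 : (0:ℝ) < x := lt_trans one_pos hx.1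
    apply mul_nonneg (fk_nonneg hα k hx.1.le)
    have h1 : x ^ α ≤ t ^ α := Real.rpow_le_rpow hx0.le hx.2 hα.le
    have h2 : x ^ α * c ≤ t ^ α * c := mul_le_mul_of_nonneg_right h1 hc
    linarith

lemma setLIntegral_dens (hα : 0 < α) (k : ℕ) {s : Set ℝ} (hs : MeasurableSet s)
    {t : ℝ} (ht : 1 < t) (hst : s ∩ Ioi 1 = Ioc 1 t) :
    ∫⁻ x in s, dens α k x
      = ENNReal.ofReal ((1 + ((k:ℝ) + 1) * t ^ (-α)) * (1 - t ^ (-α)) ^ (k + 1)) := by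
  rw [← lintegral_indicator hs, dens_eq_indicator, indicator_indicator, hst,
    lintegral_indicator measurableSet_Ioc]
  have := lint_Ioc hα k ht le_rfl (c := 0) (by simp)
  simp only [mul_zero, sub_zero, mul_one, zero_mul] at this
  rw [this]

lemma setLIntegral_dens_zero (k : ℕ) {s : Set ℝ} (hs : MeasurableSet s)
    (hst : s ∩ Ioi 1 = ∅) : ∫⁻ x in s, dens α k x = 0 := by
  rw [← lintegral_indicator hs, dens_eq_indicator, indicator_indicator, hst]
  simp

lemma pareto_eq : pareto α = volume.withDensity (dens α 0) := by
  unfold pareto dens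
  congr 1
  funext x
  congr 1
  split_ifs with h
  · unfold fk; push_cast; ring
  · rfl

lemma pareto_Iic_zero {u : ℝ} (hu : u ≤ 1) : pareto α (Iic u) = 0 := by
  rw [pareto_eq, withDensity_apply _ measurableSet_Iic]
  apply setLIntegral_dens_zero 0 measurableSet_Iic
  ext y
  simp only [mem_inter_iff, mem_Iic, mem_Ioi, mem_empty_iff_false, iff_false, not_and]
  intro h1 h2
  linarith

lemma pareto_Iic (hα : 0 < α) {u : ℝ} (hu : 1 < u) :
    pareto α (Iic u) = ENNReal.ofReal ((1 + u ^ (-α)) * (1 - u ^ (-α))) := by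
  rw [pareto_eq, withDensity_apply _ measurableSet_Iic,
    setLIntegral_dens hα 0 measurableSet_Iic hu (by rw [inter_comm, Ioi_inter_Iic])]
  norm_num

lemma kernel_gt {x : ℝ} (hx : 1 < x) :
    kendallKernel α x 1 = ENNReal.ofReal (1 - x ^ (-α)) • Measure.dirac x
      + ENNReal.ofReal (x ^ (-α)) • Measure.map (fun y => x * y) (pareto α) := by
  have hx0 : (0:ℝ) < x := lt_trans one_pos hx
  unfold kendallKernel kendallKernelLe
  rw [min_eq_right hx.le, max_eq_left hx.le, if_neg hx0.ne']
  have h1 : ((1:ℝ)/x) ^ α = x ^ (-α) := by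
    rw [one_div, Real.inv_rpow hx0.le, ← Real.rpow_neg hx0.le]
  rw [h1]

lemma kernel_Iic_eval (hα : 0 < α) {x t : ℝ} (hx : 1 < x) :
    (kendallKernel α x 1) (Iic t)
      = if x ≤ t then ENNReal.ofReal (1 - x ^ α * t ^ (-(2*α))) else 0 := by
  have hx0 : (0:ℝ) < x := lt_trans one_pos hx
  rw [kernel_gt hx, Measure.add_apply, Measure.smul_apply, Measure.smul_apply,
    smul_eq_mul, smul_eq_mul, Measure.dirac_apply' _ measurableSet_Iic,
    Measure.map_apply (measurable_const_mul x) measurableSet_Iic]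
  have hpre : (fun y => x*y) ⁻¹' (Iic t) = Iic (t / x) := by
    ext y
    simp only [mem_preimage, mem_Iic]
    rw [le_div_iff₀ hx0, mul_comm]
  rw [hpre]
  split_ifs with hxt
  · have ht0 : (0:ℝ) < t := lt_of_lt_of_le hx0 hxt
    rw [Set.indicator_of_mem (show x ∈ Iic t from hxt), Pi.one_apply, mul_one]
    rcases lt_or_eq_of_le hxt with hlt | heq
    · have hdiv : 1 < t / x := (one_lt_div hx0).mpr hlt
      rw [pareto_Iic hα hdiv]
      have hd0 : (0:ℝ) < t / x := lt_trans one_pos hdiv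
      have hv1 : (t/x) ^ (-α) ≤ 1 :=
        Real.rpow_le_one_of_one_le_of_nonpos hdiv.le (neg_nonpos.mpr hα.le)
      have hv0 : (0:ℝ) ≤ (t/x) ^ (-α) := Real.rpow_nonneg hd0.le _
      have hxu : x ^ (-α) ≤ 1 :=
        Real.rpow_le_one_of_one_le_of_nonpos hx.le (neg_nonpos.mpr hα.le)
      rw [← ENNReal.ofReal_mul (Real.rpow_nonneg hx0.le _),
        ← ENNReal.ofReal_add (by linarith)
          (mul_nonneg (Real.rpow_nonneg hx0.le _)
            (mul_nonneg (by linarith) (by linarith)))]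
      congr 1
      have h1 : (t/x) ^ (-α) = t ^ (-α) * x ^ α := by
        rw [Real.div_rpow ht0.le hx0.le, div_eq_mul_inv, Real.rpow_neg hx0.le, inv_inv]
      have h2 : x ^ (-α) * x ^ α = 1 := by
        rw [← Real.rpow_add hx0]; simp
      have h3 : t ^ (-α) * t ^ (-α) = t ^ (-(2*α)) := by
        rw [← Real.rpow_add ht0]; ring_nf
      rw [h1]
      linear_combination (-(x^α : ℝ)) * h3 + (-(x^α * t^(-α) * t^(-α))) * h2
    · subst heq
      rw [div_self hx0.ne', pareto_Iic_zero le_rfl, mul_zero, add_zero]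
      congr 1
      have h2 : x ^ α * x ^ (-(2*α)) = x ^ (-α) := by
        rw [← Real.rpow_add hx0]; ring_nf
      rw [h2]
  · rw [Set.indicator_of_notMem (show x ∉ Iic t from hxt), mul_zero, zero_add,
      pareto_Iic_zero, mul_zero]
    exact (div_le_one hx0).mpr (le_of_not_ge hxt)

lemma step (hα : 0 < α) (k : ℕ) :
    (volume.withDensity (dens α k)).bind (fun x => kendallKernel α x 1)
      = volume.withDensity (dens α (k+1)) := by
  haveI : IsFiniteMeasure (volume.withDensity (dens α (k+1))) := by
    apply isFiniteMeasure_withDensity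
    have hbound : ∀ x : ℝ, dens α (k+1) x
        ≤ (Ioi 1).indicator
            (fun x => ENNReal.ofReal (α * ((k:ℝ)+3)*((k:ℝ)+2) * x ^ (-(2*α)-1))) x := by
      intro x
      by_cases hx : 1 < x
      · rw [Set.indicator_of_mem (show x ∈ Ioi 1 from hx)]
        simp only [dens, if_pos hx]
        apply ENNReal.ofReal_le_ofReal
        have hx0 : (0:ℝ) < x := lt_trans one_pos hx
        have h1 : x ^ (-α) ≤ 1 :=
          Real.rpow_le_one_of_one_le_of_nonpos hx.le (neg_nonpos.mpr hα.le)
        have h2 : (0:ℝ) ≤ 1 - x ^ (-α) := by linarith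
        unfold fk
        push_cast
        have h3 : (1 - x ^ (-α)) ^ (k+1) ≤ 1 := by
          apply pow_le_one₀ h2
          have := Real.rpow_nonneg hx0.le (-α)
          linarith
        have h4 : (0:ℝ) ≤ α * ((k:ℝ)+2+2) * ((k:ℝ)+1+1) * x ^ (-(2*α)-1) := by
          have := Real.rpow_nonneg hx0.le (-(2*α)-1)
          positivity
        calc α * ((k:ℝ)+1+2) * ((k:ℝ)+1+1) * x ^ (-(2*α)-1) * (1 - x ^ (-α)) ^ (k+1)
            ≤ α * ((k:ℝ)+1+2) * ((k:ℝ)+1+1) * x ^ (-(2*α)-1) * 1 := by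
              apply mul_le_mul_of_nonneg_left h3
              have := Real.rpow_nonneg hx0.le (-(2*α)-1)
              positivity
          _ = α * ((k:ℝ)+3)*((k:ℝ)+2) * x ^ (-(2*α)-1) := by ring
      · rw [Set.indicator_of_notMem (show x ∉ Ioi 1 from hx)]
        simp [dens, hx]
    apply ne_of_lt
    calc ∫⁻ x, dens α (k+1) x ∂volume
        ≤ ∫⁻ x, (Ioi 1).indicator
            (fun x => ENNReal.ofReal (α * ((k:ℝ)+3)*((k:ℝ)+2) * x ^ (-(2*α)-1))) x ∂volume :=
          lintegral_mono hbound
      _ = ∫⁻ x in Ioi 1, ENNReal.ofReal (α * ((k:ℝ)+3)*((k:ℝ)+2) * x ^ (-(2*α)-1)) ∂volume :=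
          lintegral_indicator measurableSet_Ioi _
      _ < ⊤ := by
          rw [← ofReal_integral_eq_lintegral_ofReal]
          · exact ENNReal.ofReal_lt_top
          · exact (integrableOn_Ioi_rpow_of_lt (by linarith) one_pos).const_mul _
          · filter_upwards [self_mem_ae_restrict measurableSet_Ioi] with x hx
            have hx0 : (0:ℝ) < x := lt_trans one_pos hx
            have := Real.rpow_nonneg hx0.le (-(2*α)-1)
            positivity
  symm
  apply Measure.ext_of_Iic
  intro t
  rw [Measure.bind_apply measurableSet_Iic (measurable_kernel α 1).aemeasurable]
  have hg : Measurable (fun a : ℝ => (kendallKernel α a 1) (Iic t)) :=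
    (Measure.measurable_coe measurableSet_Iic).comp (measurable_kernel α 1)
  rw [lintegral_withDensity_eq_lintegral_mul volume (measurable_dens k) hg]
  by_cases ht : 1 < t
  · rw [withDensity_apply _ measurableSet_Iic,
      setLIntegral_dens hα (k+1) measurableSet_Iic ht (by rw [inter_comm, Ioi_inter_Iic])]
    have ht0 : (0:ℝ) < t := lt_trans one_pos ht
    have hint : (fun x => (dens α k * fun x => (kendallKernel α x 1) (Iic t)) x)
        = (Ioc 1 t).indicator
            (fun x => ENNReal.ofReal (fk α k x * (1 - x ^ α * t^(-(2*α))))) := by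
      funext x
      simp only [Pi.mul_apply]
      by_cases hx1 : 1 < x
      · rw [kernel_Iic_eval hα hx1]
        by_cases hxt : x ≤ t
        · rw [if_pos hxt, Set.indicator_of_mem (show x ∈ Ioc 1 t from ⟨hx1, hxt⟩),
            show dens α k x = ENNReal.ofReal (fk α k x) from by simp [dens, hx1],
            ← ENNReal.ofReal_mul (fk_nonneg hα k hx1.le)]
        · rw [if_neg hxt, mul_zero,
            Set.indicator_of_notMem (fun h => hxt h.2)]
      · rw [show dens α k x = 0 from by simp [dens, hx1], zero_mul,
          Set.indicator_of_notMem (fun h => hx1 h.1)]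
    have hc0 : (0:ℝ) ≤ t^(-(2*α)) := Real.rpow_nonneg ht0.le _
    have hct : t ^ α * t^(-(2*α)) ≤ 1 := by
      have h2 : t ^ α * t ^ (-(2*α)) = t ^ (-α) := by
        rw [← Real.rpow_add ht0]; ring_nf
      rw [h2]
      exact Real.rpow_le_one_of_one_le_of_nonpos ht.le (neg_nonpos.mpr hα.le)
    rw [hint, lintegral_indicator measurableSet_Ioc, lint_Ioc hα k ht hc0 hct]
    congr 1
    have h3 : t ^ (-α) * t ^ (-α) = t ^ (-(2*α)) := by
      rw [← Real.rpow_add ht0]; ring_nf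
    rw [← h3]
    push_cast
    ring
  · rw [withDensity_apply _ measurableSet_Iic,
      setLIntegral_dens_zero (k+1) measurableSet_Iic
        (by
          ext y
          simp only [mem_inter_iff, mem_Iic, mem_Ioi, mem_empty_iff_false, iff_false, not_and]
          intro h1 h2
          linarith)]
    symm
    have hz : ∀ x : ℝ, (dens α k * fun x => (kendallKernel α x 1) (Iic t)) x = 0 := by
      intro x
      simp only [Pi.mul_apply]
      by_cases hx1 : 1 < x
      · rw [kernel_Iic_eval hα hx1, if_neg (by push_neg at ht ⊢; linarith), mul_zero]
      · rw [show dens α k x = 0 from by simp [dens, hx1], zero_mul]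
    rw [show (fun x => (dens α k * fun x => (kendallKernel α x 1) (Iic t)) x)
        = fun _ => (0:ENNReal) from funext hz]
    simp

lemma kpow_one (hα : 0 < α) : kendallPow α (Measure.dirac 1) 1 = Measure.dirac 1 := by
  have h : kendallPow α (Measure.dirac 1) 1
      = kendallConv α (Measure.dirac 0) (Measure.dirac 1) := rfl
  rw [h, conv_dirac, Measure.dirac_bind (measurable_kernel α 1)]
  unfold kendallKernel kendallKernelLe
  rw [min_eq_left zero_le_one, max_eq_right zero_le_one, if_neg one_ne_zero]
  simp [Real.zero_rpow hα.ne']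

lemma kpow_two (hα : 0 < α) : kendallPow α (Measure.dirac 1) 2 = pareto α := by
  have h : kendallPow α (Measure.dirac 1) 2
      = kendallConv α (kendallPow α (Measure.dirac 1) 1) (Measure.dirac 1) := rfl
  rw [h, kpow_one hα, conv_dirac, Measure.dirac_bind (measurable_kernel α 1)]
  unfold kendallKernel kendallKernelLe
  rw [min_self, max_self, if_neg one_ne_zero]
  have h1 : ((1:ℝ)/1) ^ α = 1 := by norm_num
  rw [h1]
  simp [Measure.map_id]

lemma main_density (hα : 0 < α) : ∀ k : ℕ,
    kendallPow α (Measure.dirac 1) (k+2) = volume.withDensity (dens α k)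
  | 0 => by rw [kpow_two hα, pareto_eq]
  | (k+1) => by
    have h : kendallPow α (Measure.dirac 1) (k+1+2)
        = kendallConv α (kendallPow α (Measure.dirac 1) (k+2)) (Measure.dirac 1) := rfl
    rw [h, main_density hα k, conv_dirac, step hα k]

end KendallAux

/-- For `α > 0` and `n ≥ 2`, the `n`-fold Kendall convolution power `δ_1^{△_α n}` is
absolutely continuous with density `x ↦ α n (n-1) x^(-2α-1) (1 - x^(-α))^(n-2) 1_{(1,∞)}(x)`;
equivalently, `δ_1^{△_α n}([0,x]) = (1 + (n-1) x^(-α)) (1 - x^(-α))_+^(n-1)` for all `x > 0`.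
In particular, `δ_1^{△_α 2} = π_{2α}`. -/
theorem kendallPow_dirac_one
    (α : ℝ) (hα : 0 < α) (n : ℕ) (hn : 2 ≤ n) :
    kendallPow α (Measure.dirac 1) n
      = volume.withDensity (fun x => ENNReal.ofReal
          (if 1 < x then
            α * n * ((n : ℝ) - 1) * x ^ (-(2 * α) - 1) * (1 - x ^ (-α)) ^ (n - 2)
          else 0))
    ∧ (∀ x : ℝ, 0 < x →
        ((kendallPow α (Measure.dirac 1) n) (Set.Icc 0 x)).toReal
          = (1 + ((n : ℝ) - 1) * x ^ (-α)) * (max (1 - x ^ (-α)) 0) ^ (n - 1))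
    ∧ kendallPow α (Measure.dirac 1) 2 = pareto α := by
  obtain ⟨k, rfl⟩ : ∃ k, n = k + 2 := ⟨n - 2, by omega⟩
  refine ⟨?_, ?_, KendallAux.kpow_two hα⟩
  · rw [KendallAux.main_density hα k]
    unfold KendallAux.dens KendallAux.fk
    congr 1
    funext x
    congr 1
    split_ifs with h
    · have he : k + 2 - 2 = k := by omega
      rw [he]
      push_cast
      ring
    · rfl
  · intro x hx
    rw [KendallAux.main_density hα k, withDensity_apply _ measurableSet_Icc]
    by_cases hx1 : 1 < x
    · rw [KendallAux.setLIntegral_dens hα k measurableSet_Icc hx1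
        (by
          ext y
          simp only [mem_inter_iff, mem_Icc, mem_Ioi, mem_Ioc]
          constructor
          · rintro ⟨⟨_, h2⟩, h3⟩; exact ⟨h3, h2⟩
          · rintro ⟨h1, h2⟩; exact ⟨⟨by linarith, h2⟩, h1⟩)]
      have hx0 : (0:ℝ) < x := lt_trans one_pos hx1
      have hu1 : x ^ (-α) ≤ 1 :=
        Real.rpow_le_one_of_one_le_of_nonpos hx1.le (neg_nonpos.mpr hα.le)
      have hu0 : (0:ℝ) ≤ x ^ (-α) := Real.rpow_nonneg hx0.le _
      have h5 : (0:ℝ) ≤ ((k:ℝ)+1) * x ^ (-α) := mul_nonneg (by positivity) hu0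
      rw [ENNReal.toReal_ofReal
        (mul_nonneg (by linarith) (pow_nonneg (by linarith) _))]
      rw [max_eq_left (by linarith)]
      have he : k + 2 - 1 = k + 1 := by omega
      rw [he]
      push_cast
      ring
    · rw [KendallAux.setLIntegral_dens_zero k measurableSet_Icc
        (by
          ext y
          simp only [mem_inter_iff, mem_Icc, mem_Ioi, mem_empty_iff_false, iff_false, not_and]
          rintro ⟨_, h2⟩ h3
          push_neg at hx1
          linarith)]
      have hmax : max (1 - x ^ (-α)) 0 = 0 := by
        apply max_eq_right
        have : 1 ≤ x ^ (-α) :=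
          Real.one_le_rpow_of_pos_of_le_one_of_nonpos hx (le_of_not_gt hx1)
            (neg_nonpos.mpr hα.le)
        linarith
      rw [hmax, ENNReal.toReal_zero, zero_pow (by omega : k + 2 - 1 ≠ 0), mul_zero]
end
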